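/- Let A = {(z,0) : z ∈ ℤ} and B = {(0,n) : n ∈ ℤ} be subgroups of ℤ[1/2] ⋊ ℤ, and let φ : A → B be the isomorphism φ(z,0) = (0,z). Then the Baumslag group G_(1,2) is isomorphic to the HNN extension of ℤ[1/2] ⋊ ℤ with associated subgroups A and B and associating isomorphism φ, via an isomorphism sending the generator a of G_(1,2) to the image of (1,0) and the generator b to the stable letter. -/

import Mathlib

/-- A rational number is *dyadic* (an element of ℤ[1/2]) if it has the form `u·2^x`
with `u, x ∈ ℤ`. -/
def IsDyadic (q : ℚ) : Prop := ∃ u x : ℤ, q = (u : ℚ) * 2 ^ x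

theorem isDyadic_int (z : ℤ) : IsDyadic (z : ℚ) := ⟨z, 0, by norm_num⟩

theorem isDyadic_zero : IsDyadic (0 : ℚ) := ⟨0, 0, by norm_num⟩

theorem isDyadic_one : IsDyadic (1 : ℚ) := ⟨1, 0, by norm_num⟩

theorem IsDyadic.add {a b : ℚ} (ha : IsDyadic a) (hb : IsDyadic b) : IsDyadic (a + b) := by
  obtain ⟨u, x, rfl⟩ := ha
  obtain ⟨v, y, rfl⟩ := hb
  rcases le_total x y with h | h
  · refine ⟨u + v * 2 ^ (y - x).toNat, x, ?_⟩
    have h2 : (((y - x).toNat : ℤ)) = y - x := Int.toNat_of_nonneg (by omega)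
    have h3 : (2 : ℚ) ^ ((y - x).toNat) = (2 : ℚ) ^ (y - x : ℤ) := by
      rw [← zpow_natCast (2 : ℚ) (y - x).toNat, h2]
    have h4 : y - x + x = y := by omega
    push_cast
    rw [h3, add_mul, mul_assoc, ← zpow_add₀ (by norm_num : (2:ℚ) ≠ 0), h4]
  · refine ⟨u * 2 ^ (x - y).toNat + v, y, ?_⟩
    have h2 : (((x - y).toNat : ℤ)) = x - y := Int.toNat_of_nonneg (by omega)
    have h3 : (2 : ℚ) ^ ((x - y).toNat) = (2 : ℚ) ^ (x - y : ℤ) := by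
      rw [← zpow_natCast (2 : ℚ) (x - y).toNat, h2]
    have h4 : x - y + y = x := by omega
    push_cast
    rw [h3, add_mul, mul_assoc, ← zpow_add₀ (by norm_num : (2:ℚ) ≠ 0), h4]

theorem IsDyadic.neg {a : ℚ} (ha : IsDyadic a) : IsDyadic (-a) := by
  obtain ⟨u, x, rfl⟩ := ha
  exact ⟨-u, x, by push_cast; ring⟩

theorem IsDyadic.zpow_mul (x : ℤ) {a : ℚ} (ha : IsDyadic a) : IsDyadic (2 ^ x * a) := by
  obtain ⟨u, y, rfl⟩ := ha
  exact ⟨u, x + y, by rw [zpow_add₀ (by norm_num : (2:ℚ) ≠ 0)]; ring⟩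

theorem IsDyadic.mul_zpow {a : ℚ} (ha : IsDyadic a) (x : ℤ) : IsDyadic (a * 2 ^ x) := by
  obtain ⟨u, y, rfl⟩ := ha
  exact ⟨u, y + x, by rw [zpow_add₀ (by norm_num : (2:ℚ) ≠ 0)]; ring⟩

/-- The additive group ℤ[1/2] of dyadic rationals. -/
def ZHalf : Type := {q : ℚ // IsDyadic q}

/-- The semidirect product ℤ[1/2] ⋊ ℤ: pairs `(r, m)` with `r ∈ ℤ[1/2]`, `m ∈ ℤ`,
and multiplication `(r, m)·(s, n) = (r + 2^m·s, m + n)`. -/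
def SDP : Type := ZHalf × ℤ

instance : Group SDP where
  mul p q := (⟨p.1.1 + 2 ^ p.2 * q.1.1, p.1.2.add (IsDyadic.zpow_mul _ q.1.2)⟩, p.2 + q.2)
  one := (⟨0, isDyadic_zero⟩, 0)
  inv p := (⟨-(2 ^ (-p.2) * p.1.1), (IsDyadic.zpow_mul _ p.1.2).neg⟩, -p.2)
  mul_assoc p q r := by
    refine Prod.ext (Subtype.ext ?_) ?_
    · show (p.1.1 + 2 ^ p.2 * q.1.1) + 2 ^ (p.2 + q.2) * r.1.1
        = p.1.1 + 2 ^ p.2 * (q.1.1 + 2 ^ q.2 * r.1.1)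
      rw [zpow_add₀ (by norm_num : (2:ℚ) ≠ 0)]; ring
    · show p.2 + q.2 + r.2 = p.2 + (q.2 + r.2); ring
  one_mul p := by
    refine Prod.ext (Subtype.ext ?_) ?_
    · show (0 : ℚ) + 2 ^ (0 : ℤ) * p.1.1 = p.1.1
      norm_num
    · show 0 + p.2 = p.2; ring
  mul_one p := by
    refine Prod.ext (Subtype.ext ?_) ?_
    · show p.1.1 + 2 ^ p.2 * 0 = p.1.1
      ring
    · show p.2 + 0 = p.2; ring
  inv_mul_cancel p := by
    refine Prod.ext (Subtype.ext ?_) ?_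
    · show -(2 ^ (-p.2) * p.1.1) + 2 ^ (-p.2) * p.1.1 = (0 : ℚ)
      ring
    · show -p.2 + p.2 = 0; ring

@[simp] theorem SDP.mul_fst (p q : SDP) : (p * q).1.1 = p.1.1 + 2 ^ p.2 * q.1.1 := rfl
@[simp] theorem SDP.mul_snd (p q : SDP) : (p * q).2 = p.2 + q.2 := rfl
@[simp] theorem SDP.one_fst : (1 : SDP).1.1 = 0 := rfl
@[simp] theorem SDP.one_snd : (1 : SDP).2 = 0 := rfl
@[simp] theorem SDP.inv_fst (p : SDP) : (p⁻¹).1.1 = -(2 ^ (-p.2) * p.1.1) := rfl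
@[simp] theorem SDP.inv_snd (p : SDP) : (p⁻¹).2 = -p.2 := rfl

/-- The single relator `(b a b⁻¹) a (b a b⁻¹)⁻¹ a⁻²` of the Baumslag group G_(1,2),
with `a` the generator of index `0` and `b` the generator of index `1`. -/
def baumRels : Set (FreeGroup (Fin 2)) :=
  {(FreeGroup.of 1 * FreeGroup.of 0 * (FreeGroup.of 1)⁻¹) * FreeGroup.of 0 *
      (FreeGroup.of 1 * FreeGroup.of 0 * (FreeGroup.of 1)⁻¹)⁻¹ *
      (FreeGroup.of 0 * FreeGroup.of 0)⁻¹}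

/-- The Baumslag group G_(1,2) = ⟨a, b ∣ (b a b⁻¹) a (b a b⁻¹)⁻¹ = a²⟩. -/
abbrev Baumslag : Type := PresentedGroup baumRels

/-- The generator `a` of the Baumslag group. -/
def bgA : Baumslag := PresentedGroup.of 0

/-- The generator `b` of the Baumslag group. -/
def bgB : Baumslag := PresentedGroup.of 1

/-- The subgroup A = {(z, 0) : z ∈ ℤ} of ℤ[1/2] ⋊ ℤ. -/
def Asub : Subgroup SDP where
  carrier := {p | (∃ z : ℤ, p.1.1 = (z : ℚ)) ∧ p.2 = 0}
  one_mem' := ⟨⟨0, by norm_num⟩, rfl⟩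
  mul_mem' := by
    rintro p q ⟨⟨zp, hzp⟩, hp0⟩ ⟨⟨zq, hzq⟩, hq0⟩
    refine ⟨⟨zp + zq, ?_⟩, ?_⟩
    · show p.1.1 + 2 ^ p.2 * q.1.1 = _
      rw [hp0, hzp, hzq]
      push_cast
      norm_num
    · show p.2 + q.2 = 0
      omega
  inv_mem' := by
    rintro p ⟨⟨z, hz⟩, h0⟩
    refine ⟨⟨-z, ?_⟩, ?_⟩
    · show -(2 ^ (-p.2) * p.1.1) = _
      rw [h0, hz]
      push_cast
      norm_num
    · show -p.2 = 0
      omega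

/-- The subgroup B = {(0, n) : n ∈ ℤ} of ℤ[1/2] ⋊ ℤ. -/
def Bsub : Subgroup SDP where
  carrier := {p | p.1.1 = 0}
  one_mem' := rfl
  mul_mem' := by
    rintro p q hp hq
    show p.1.1 + 2 ^ p.2 * q.1.1 = 0
    rw [hp, hq]
    ring
  inv_mem' := by
    rintro p hp
    show -(2 ^ (-p.2) * p.1.1) = 0
    rw [hp]
    ring

/-- The isomorphism φ : A → B, φ(z, 0) = (0, z). -/
noncomputable def swapAB : Asub ≃* Bsub where
  toFun p := ⟨(⟨0, isDyadic_zero⟩, p.2.1.choose), rfl⟩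
  invFun q := ⟨(⟨(q.1.2 : ℚ), isDyadic_int _⟩, 0), ⟨q.1.2, rfl⟩, rfl⟩
  left_inv p := by
    obtain ⟨⟨⟨r, hd⟩, m⟩, hmem⟩ := p
    have h1 : r = ((hmem.1.choose : ℤ) : ℚ) := hmem.1.choose_spec
    exact Subtype.ext (Prod.ext (Subtype.ext h1.symm) hmem.2.symm)
  right_inv q := by
    obtain ⟨⟨⟨r, hd⟩, m⟩, hmem⟩ := q
    have hr : r = 0 := hmem
    have hex : ∃ z : ℤ, ((m : ℚ)) = (z : ℚ) := ⟨m, rfl⟩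
    have h1 : ((m : ℚ)) = ((hex.choose : ℤ) : ℚ) := hex.choose_spec
    have h2 : hex.choose = m := by exact_mod_cast h1.symm
    exact Subtype.ext (Prod.ext (Subtype.ext hr.symm) h2)
  map_mul' p q := by
    have h1 := (p * q).2.1.choose_spec
    have h2 := p.2.1.choose_spec
    have h3 := q.2.1.choose_spec
    have hp0 : p.1.2 = 0 := p.2.2
    have key : (((p * q).2.1.choose : ℤ) : ℚ)
        = ((p.2.1.choose : ℤ) : ℚ) + ((q.2.1.choose : ℤ) : ℚ) := by
      rw [← h1, ← h2, ← h3]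
      show p.1.1.1 + 2 ^ p.1.2 * q.1.1.1 = p.1.1.1 + q.1.1.1
      rw [hp0]
      norm_num
    have hz : (p * q).2.1.choose = p.2.1.choose + q.2.1.choose := by exact_mod_cast key
    exact Subtype.ext (Prod.ext (Subtype.ext (by show (0:ℚ) = 0 + 2 ^ _ * 0; ring)) hz)

/-! ### Auxiliary development for the isomorphism -/

noncomputable section BaumAux

/-- `c = b a b⁻¹` in the Baumslag group. -/
def cC : Baumslag := bgB * bgA * bgB⁻¹

theorem baum_rel : cC * bgA * cC⁻¹ = bgA * bgA := by
  have h : (PresentedGroup.mk baumRels)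
      ((FreeGroup.of 1 * FreeGroup.of 0 * (FreeGroup.of 1)⁻¹) * FreeGroup.of 0 *
        (FreeGroup.of 1 * FreeGroup.of 0 * (FreeGroup.of 1)⁻¹)⁻¹ *
        (FreeGroup.of 0 * FreeGroup.of 0)⁻¹) = 1 := by
    apply (QuotientGroup.eq_one_iff _).2
    exact Subgroup.subset_normalClosure rfl
  simp only [map_mul, map_inv] at h
  have h' := mul_inv_eq_one.mp h
  simpa [cC, bgA, bgB, PresentedGroup.of, mul_assoc] using h'

theorem conj_cC_zpow (z : ℤ) : cC * bgA ^ z * cC⁻¹ = bgA ^ (2 * z) := by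
  rw [← conj_zpow, baum_rel]
  rw [show bgA * bgA = bgA ^ (2 : ℤ) by rw [zpow_two], ← zpow_mul]

theorem cC_pow_conj (n : ℕ) : ∀ z : ℤ,
    cC ^ (n : ℤ) * bgA ^ z * cC ^ (-(n : ℤ)) = bgA ^ ((2 : ℤ) ^ n * z) := by
  induction n with
  | zero => intro z; simp
  | succ k ih =>
    intro z
    have h1 : ((k + 1 : ℕ) : ℤ) = (k : ℤ) + 1 := by push_cast; ring
    rw [h1, zpow_add_one, show -((k:ℤ)+1) = -1 + -(k:ℤ) by ring,
      zpow_add, zpow_neg_one]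
    have e : cC ^ (k:ℤ) * cC * bgA ^ z * (cC⁻¹ * cC ^ (-(k:ℤ)))
        = cC ^ (k:ℤ) * (cC * bgA ^ z * cC⁻¹) * cC ^ (-(k:ℤ)) := by group
    rw [e, conj_cC_zpow, ih (2 * z)]
    congr 1
    rw [pow_succ]; ring

theorem cast_helper (u w x : ℤ) (h : w ≤ x) :
    ((u * 2 ^ (x - w).toNat : ℤ) : ℚ) * 2 ^ w = (u : ℚ) * 2 ^ x := by
  push_cast
  rw [← zpow_natCast (2 : ℚ) (x - w).toNat, Int.toNat_of_nonneg (by omega),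
    mul_assoc, ← zpow_add₀ (by norm_num : (2:ℚ) ≠ 0), sub_add_cancel]

theorem dlem_le {u x v y : ℤ} (hxy : x ≤ y) (h : (u : ℚ) * 2 ^ x = (v : ℚ) * 2 ^ y) :
    cC ^ x * bgA ^ u * cC ^ (-x) = cC ^ y * bgA ^ v * cC ^ (-y) := by
  have hc := cast_helper v x y hxy
  have h2x : (2 : ℚ) ^ x ≠ 0 := zpow_ne_zero _ (by norm_num)
  have hu : u = v * 2 ^ (y - x).toNat := by
    have h2 := mul_right_cancel₀ h2x (h.trans hc.symm)
    exact_mod_cast h2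
  have key := cC_pow_conj (y - x).toNat v
  have hyx : (((y - x).toNat : ℤ)) = y - x := Int.toNat_of_nonneg (by omega)
  rw [hyx] at key
  calc cC ^ x * bgA ^ u * cC ^ (-x)
      = cC ^ x * bgA ^ ((2:ℤ) ^ (y-x).toNat * v) * cC ^ (-x) := by
        rw [hu]; ring_nf
    _ = cC ^ x * (cC ^ (y - x) * bgA ^ v * cC ^ (-(y - x))) * cC ^ (-x) := by rw [key]
    _ = cC ^ y * bgA ^ v * cC ^ (-y) := by
        rw [show y = x + (y - x) by ring, show -(x + (y-x)) = -(y-x) + -x by ring,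
          zpow_add, zpow_add]
        group

theorem dlem {u x v y : ℤ} (h : (u : ℚ) * 2 ^ x = (v : ℚ) * 2 ^ y) :
    cC ^ x * bgA ^ u * cC ^ (-x) = cC ^ y * bgA ^ v * cC ^ (-y) := by
  rcases le_total x y with hxy | hxy
  · exact dlem_le hxy h
  · exact (dlem_le hxy h.symm).symm

/-- The embedding of ℤ[1/2] into the Baumslag group: `u·2^x ↦ c^x a^u c^(-x)`. -/
def eD (q : ZHalf) : Baumslag :=
  cC ^ q.2.choose_spec.choose * bgA ^ q.2.choose * cC ^ (-q.2.choose_spec.choose)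

theorem eD_spec (q : ZHalf) (u x : ℤ) (h : q.1 = (u : ℚ) * 2 ^ x) :
    eD q = cC ^ x * bgA ^ u * cC ^ (-x) := by
  have h0 : q.1 = (q.2.choose : ℚ) * 2 ^ q.2.choose_spec.choose := q.2.choose_spec.choose_spec
  exact dlem (h0.symm.trans h)

/-- The homomorphism `SDP →* Baumslag`, `(u·2^x, m) ↦ c^x a^u c^(-x) · c^m`. -/
def Fhom : SDP →* Baumslag where
  toFun p := eD p.1 * cC ^ p.2
  map_one' := by
    have h : eD ((1 : SDP).1) = cC ^ (0:ℤ) * bgA ^ (0:ℤ) * cC ^ (-(0:ℤ)) :=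
      eD_spec _ 0 0 (by norm_num)
    show eD ((1 : SDP).1) * cC ^ ((1 : SDP).2) = 1
    rw [h, SDP.one_snd]; group
  map_mul' p q := by
    obtain ⟨u, x, hu⟩ := p.1.2
    obtain ⟨v, y, hv⟩ := q.1.2
    set m : ℤ := p.2
    set n : ℤ := q.2
    set w : ℤ := min x (m + y) with hw
    have hw1 : w ≤ x := min_le_left _ _
    have hw2 : w ≤ m + y := min_le_right _ _
    set U : ℤ := u * 2 ^ (x - w).toNat with hU
    set V : ℤ := v * 2 ^ (m + y - w).toNat with hV
    have hUq : (U : ℚ) * 2 ^ w = (u : ℚ) * 2 ^ x := cast_helper u w x hw1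
    have hVq : (V : ℚ) * 2 ^ w = (v : ℚ) * 2 ^ (m + y) := cast_helper v w (m+y) hw2
    have hsum : (p * q).1.1 = ((U + V : ℤ) : ℚ) * 2 ^ w := by
      rw [SDP.mul_fst, hu, hv]
      push_cast
      rw [add_mul, hUq, hVq, zpow_add₀ (by norm_num : (2:ℚ) ≠ 0)]
      ring
    have h1 : eD (p * q).1 = cC ^ w * bgA ^ (U + V) * cC ^ (-w) := eD_spec _ _ _ hsum
    have h2 : eD p.1 = cC ^ x * bgA ^ u * cC ^ (-x) := eD_spec _ _ _ hu
    have h3 : eD q.1 = cC ^ y * bgA ^ v * cC ^ (-y) := eD_spec _ _ _ hv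
    show eD ((p * q).1) * cC ^ ((p * q).2) = (eD p.1 * cC ^ m) * (eD q.1 * cC ^ n)
    rw [SDP.mul_snd, h1, h2, h3, zpow_add bgA]
    have e1 : cC ^ w * (bgA ^ U * bgA ^ V) * cC ^ (-w)
        = (cC ^ w * bgA ^ U * cC ^ (-w)) * (cC ^ w * bgA ^ V * cC ^ (-w)) := by group
    rw [e1, dlem hUq, dlem hVq]
    have e2 : cC ^ (m + y) * bgA ^ v * cC ^ (-(m + y))
        = cC ^ m * (cC ^ y * bgA ^ v * cC ^ (-y)) * cC ^ (-m) := by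
      rw [zpow_add, show -(m+y) = -y + -m by ring, zpow_add]; group
    rw [e2]; simp only [m, n]; group

/-- `a = (1, 0)` in SDP. -/
def aSDP : SDP := ((⟨1, isDyadic_one⟩ : ZHalf), (0 : ℤ))
/-- `(0, 1)` in SDP. -/
def tSDP : SDP := ((⟨0, isDyadic_zero⟩ : ZHalf), (1 : ℤ))

theorem aSDP_mem : aSDP ∈ Asub :=
  ⟨⟨1, show (1 : ℚ) = ((1 : ℤ) : ℚ) by norm_num⟩, rfl⟩

theorem swapAB_aSDP : ((swapAB ⟨aSDP, aSDP_mem⟩ : Bsub) : SDP) = tSDP := by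
  refine Prod.ext (Subtype.ext rfl) ?_
  show (aSDP_mem.1.choose : ℤ) = 1
  have h : (1 : ℚ) = (aSDP_mem.1.choose : ℚ) := aSDP_mem.1.choose_spec
  exact_mod_cast h.symm

/-- `n ↦ (0, n)` as a monoid hom. -/
def tHom : Multiplicative ℤ →* SDP where
  toFun n := ((⟨0, isDyadic_zero⟩ : ZHalf), n.toAdd)
  map_one' := rfl
  map_mul' a b := by
    refine Prod.ext (Subtype.ext ?_) rfl
    show (0 : ℚ) = 0 + 2 ^ (a.toAdd) * 0
    ring

/-- `u ↦ (u, 0)` as a monoid hom. -/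
def aHom : Multiplicative ℤ →* SDP where
  toFun u := ((⟨(u.toAdd : ℚ), isDyadic_int _⟩ : ZHalf), 0)
  map_one' := by
    refine Prod.ext (Subtype.ext ?_) rfl
    show (((1 : Multiplicative ℤ).toAdd : ℤ) : ℚ) = 0
    norm_num
  map_mul' a b := by
    refine Prod.ext (Subtype.ext ?_) ?_
    · show (((a * b).toAdd : ℤ) : ℚ) = (a.toAdd : ℚ) + 2 ^ (0 : ℤ) * (b.toAdd : ℚ)
      have : (a * b).toAdd = a.toAdd + b.toAdd := rfl
      rw [this]
      push_cast
      norm_num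
    · show (0 : ℤ) = 0 + 0
      ring

theorem tSDP_zpow (n : ℤ) : tSDP ^ n = ((⟨0, isDyadic_zero⟩ : ZHalf), n) := by
  have h1 : tSDP = tHom (Multiplicative.ofAdd 1) := rfl
  rw [h1, ← map_zpow, ← ofAdd_zsmul, smul_eq_mul, mul_one]
  rfl

theorem aSDP_zpow (u : ℤ) : aSDP ^ u = ((⟨(u : ℚ), isDyadic_int u⟩ : ZHalf), 0) := by
  have h1 : aSDP = aHom (Multiplicative.ofAdd 1) := by
    refine Prod.ext (Subtype.ext ?_) rfl
    show (1 : ℚ) = ((1 : ℤ) : ℚ)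
    norm_num
  rw [h1, ← map_zpow, ← ofAdd_zsmul, smul_eq_mul, mul_one]
  rfl

/-- The generating map for `Ψ : Baumslag →* HNN`. -/
def fGen : Fin 2 → HNNExtension SDP Asub Bsub swapAB :=
  ![HNNExtension.of aSDP, HNNExtension.t]

theorem key_rel :
    (HNNExtension.t : HNNExtension SDP Asub Bsub swapAB) * HNNExtension.of aSDP *
      HNNExtension.t⁻¹ = HNNExtension.of tSDP := by
  rw [← HNNExtension.equiv_eq_conj ⟨aSDP, aSDP_mem⟩, swapAB_aSDP]

theorem tSDP_aSDP : tSDP * aSDP * tSDP⁻¹ = aSDP * aSDP := by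
  refine Prod.ext (Subtype.ext ?_) ?_
  · show (0:ℚ) + 2^(1:ℤ) * 1 + 2^((1:ℤ)+0) * -(2^(-(1:ℤ)) * 0) = (1:ℚ) + 2^(0:ℤ) * 1
    norm_num
  · show (1 : ℤ) + 0 + -(1:ℤ) = 0 + 0
    ring

theorem fGen_rel : ∀ r ∈ baumRels, FreeGroup.lift fGen r = 1 := by
  intro r hr
  simp only [baumRels, Set.mem_singleton_iff] at hr
  subst hr
  simp only [map_mul, map_inv, FreeGroup.lift_apply_of]
  show fGen 1 * fGen 0 * (fGen 1)⁻¹ * fGen 0 * (fGen 1 * fGen 0 * (fGen 1)⁻¹)⁻¹ *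
      (fGen 0 * fGen 0)⁻¹ = 1
  have h0 : fGen 0 = HNNExtension.of aSDP := rfl
  have h1 : fGen 1 = HNNExtension.t := rfl
  rw [h0, h1, key_rel, ← map_mul, ← map_inv, ← map_mul, ← map_mul,
    tSDP_aSDP]
  simp [map_mul]

/-- The homomorphism `Baumslag →* HNN`. -/
def Psi : Baumslag →* HNNExtension SDP Asub Bsub swapAB :=
  PresentedGroup.toGroup fGen_rel

theorem Psi_bgA : Psi bgA = HNNExtension.of aSDP := PresentedGroup.toGroup.of fGen_rel
theorem Psi_bgB : Psi bgB = HNNExtension.t := PresentedGroup.toGroup.of fGen_rel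

theorem Psi_cC : Psi cC = HNNExtension.of tSDP := by
  rw [show cC = bgB * bgA * bgB⁻¹ from rfl, map_mul, map_mul, map_inv,
    Psi_bgA, Psi_bgB, key_rel]

theorem Fhom_lift_cond :
    ∀ a : Asub, bgB * Fhom (a : SDP) = Fhom ((swapAB a : Bsub) : SDP) * bgB := by
  rintro ⟨p, hp⟩
  obtain ⟨⟨z, hz⟩, h0⟩ := hp
  have hF1 : Fhom p = bgA ^ z := by
    show eD p.1 * cC ^ p.2 = bgA ^ z
    rw [eD_spec p.1 z 0 (by rw [hz]; norm_num), h0]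
    group
  have hF2 : Fhom ((swapAB ⟨p, ⟨⟨z, hz⟩, h0⟩⟩ : Bsub) : SDP) = cC ^ z := by
    show eD (⟨0, isDyadic_zero⟩ : ZHalf) * cC ^ (Exists.choose _ : ℤ) = cC ^ z
    have hc : (Exists.choose (⟨z, hz⟩ : ∃ w : ℤ, p.1.1 = (w:ℚ)) : ℤ) = z := by
      have hs := Exists.choose_spec (⟨z, hz⟩ : ∃ w : ℤ, p.1.1 = (w:ℚ))
      have h2 : ((Exists.choose (⟨z, hz⟩ : ∃ w : ℤ, p.1.1 = (w:ℚ)) : ℤ) : ℚ) = (z : ℚ) := by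
        rw [← hs, hz]
      exact_mod_cast h2
    rw [eD_spec (⟨0, isDyadic_zero⟩ : ZHalf) 0 0 (by show (0:ℚ) = _; norm_num), hc]
    group
  rw [hF1, hF2]
  have e : cC ^ z = bgB * bgA ^ z * bgB⁻¹ := by
    rw [show cC = bgB * bgA * bgB⁻¹ from rfl, conj_zpow]
  rw [e]
  group

/-- The homomorphism `HNN →* Baumslag`. -/
def Phi : HNNExtension SDP Asub Bsub swapAB →* Baumslag :=
  HNNExtension.lift Fhom bgB Fhom_lift_cond

theorem Psi_Fhom (g : SDP) : Psi (Fhom g) = HNNExtension.of g := by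
  obtain ⟨u, x, hu⟩ := g.1.2
  have h1 : Fhom g = cC ^ x * bgA ^ u * cC ^ (-x) * cC ^ g.2 := by
    show eD g.1 * cC ^ g.2 = _
    rw [eD_spec g.1 u x hu]
  rw [h1, map_mul, map_mul, map_mul, map_zpow, map_zpow, map_zpow, map_zpow,
    Psi_cC, Psi_bgA, ← map_zpow, ← map_zpow, ← map_zpow, ← map_zpow,
    ← map_mul, ← map_mul, ← map_mul, tSDP_zpow, tSDP_zpow, tSDP_zpow, aSDP_zpow]
  congr 1
  refine Prod.ext (Subtype.ext ?_) ?_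
  · show (0:ℚ) + 2^x * (u:ℚ) + 2^(x+0) * 0 + 2^(x+0+(-x)) * 0 = g.1.1
    rw [hu]; ring
  · show x + 0 + -x + g.2 = g.2
    ring

theorem Phi_Psi : Phi.comp Psi = MonoidHom.id Baumslag := by
  apply PresentedGroup.ext
  intro i
  fin_cases i
  · show Phi (Psi bgA) = bgA
    rw [Psi_bgA]
    rw [show Phi (HNNExtension.of aSDP) = Fhom aSDP from HNNExtension.lift_of _ _ _ _]
    show eD (⟨1, isDyadic_one⟩ : ZHalf) * cC ^ (0:ℤ) = bgA
    rw [eD_spec (⟨1, isDyadic_one⟩ : ZHalf) 1 0 (by show (1:ℚ) = _; norm_num)]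
    group
  · show Phi (Psi bgB) = bgB
    rw [Psi_bgB]
    exact HNNExtension.lift_t _ _ _

theorem Psi_Phi : Psi.comp Phi = MonoidHom.id _ := by
  apply HNNExtension.hom_ext
  · ext g
    show Psi (Phi (HNNExtension.of g)) = HNNExtension.of g
    rw [show Phi (HNNExtension.of g) = Fhom g from HNNExtension.lift_of _ _ _ _]
    exact Psi_Fhom g
  · show Psi (Phi HNNExtension.t) = HNNExtension.t
    rw [show Phi HNNExtension.t = bgB from HNNExtension.lift_t _ _ _, Psi_bgB]

end BaumAux

/-- The Baumslag group G_(1,2) is isomorphic to the HNN extension of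
ℤ[1/2] ⋊ ℤ with associated subgroups A = {(z,0)} and B = {(0,n)} and associating
isomorphism φ(z,0) = (0,z), via an isomorphism sending `a` to the image of `(1,0)`
and `b` to the stable letter. -/
theorem baumslag_iso_hnn :
    ∃ ψ : Baumslag ≃* HNNExtension SDP Asub Bsub swapAB,
      ψ bgA = HNNExtension.of (G := SDP) (A := Asub) (B := Bsub) (φ := swapAB)
          (((⟨1, isDyadic_one⟩ : ZHalf), (0 : ℤ)) : SDP) ∧
      ψ bgB = HNNExtension.t := by
  refine ⟨MonoidHom.toMulEquiv Psi Phi Phi_Psi Psi_Phi, ?_, ?_⟩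
  · exact Psi_bgA
  · exact Psi_bgB
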